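/- arXiv:1609.09034 — 2 statements merged into one kernel-verified Lean document; each statement's English description precedes it below -/
import Mathlib

section
/- Let R be a Noetherian commutative ring and M a weakly Laskerian R-module. Then the trivial ring extension (idealization) R ⋉ M is a weakly Laskerian ring. -/
section Aux
variable {R : Type*} [CommRing R]

lemma associatedPrimes_subset_union_aux [IsNoetherianRing R] {P : Type*} [AddCommGroup P] [Module R P]
    (N : Submodule R P) :
    associatedPrimes R P ⊆ associatedPrimes R N ∪ associatedPrimes R (P ⧸ N) := by
  rintro p hp'
  obtain ⟨hp, x, hx⟩ := isAssociatedPrime_iff.mp hp'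
  by_cases h : ∃ c : R, c • x ∈ N ∧ c • x ≠ 0
  · obtain ⟨c, hcN, hc0⟩ := h
    left
    refine isAssociatedPrime_iff.mpr ⟨hp, ⟨c • x, hcN⟩, ?_⟩
    ext r
    rw [hx, Submodule.mem_colon_singleton, Submodule.mem_bot,
      Submodule.mem_colon_singleton, Submodule.mem_bot]
    have hrc : (r • (⟨c • x, hcN⟩ : N) = 0) ↔ r • (c • x) = 0 := by
      rw [Subtype.ext_iff]; rfl
    rw [hrc]
    constructor
    · intro hr
      rw [smul_comm, hr, smul_zero]
    · intro hr
      rw [smul_smul] at hr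
      have : r * c ∈ p := by
        rw [hx, Submodule.mem_colon_singleton, Submodule.mem_bot, hr]
      rcases hp.mem_or_mem this with h' | h'
      · rwa [hx, Submodule.mem_colon_singleton, Submodule.mem_bot] at h'
      · exact absurd (by rwa [hx, Submodule.mem_colon_singleton, Submodule.mem_bot] at h') hc0
  · right
    push_neg at h
    refine isAssociatedPrime_iff.mpr ⟨hp, N.mkQ x, ?_⟩
    ext r
    rw [hx, Submodule.mem_colon_singleton, Submodule.mem_bot,
      Submodule.mem_colon_singleton, Submodule.mem_bot, Submodule.mkQ_apply, ← Submodule.Quotient.mk_smul,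
      Submodule.Quotient.mk_eq_zero]
    constructor
    · intro hr; rw [hr]; exact N.zero_mem
    · intro hr
      by_contra h0
      exact h0 (h r hr)

lemma associatedPrimes_quotient_finite_aux [IsNoetherianRing R] (J : Ideal R) :
    (associatedPrimes R (R ⧸ J)).Finite := by
  obtain ⟨s, hs, hprim⟩ := Submodule.isLasker R R J
  apply Set.Finite.subset (s.finite_toSet.image Ideal.radical)
  rintro p hp'
  obtain ⟨hp, x, hx⟩ := isAssociatedPrime_iff.mp hp'
  obtain ⟨x, rfl⟩ := Submodule.Quotient.mk_surjective _ x
  have hmem : ∀ r : R, r ∈ p ↔ r * x ∈ J := by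
    intro r
    rw [hx, Submodule.mem_colon_singleton, Submodule.mem_bot, ← Submodule.Quotient.mk_smul,
      Submodule.Quotient.mk_eq_zero, smul_eq_mul]
  have hpeq : p = s.inf (fun Q => Q.colon (Ideal.span {x})) := by
    ext r
    rw [hmem, Submodule.mem_finsetInf]
    simp only [Ideal.mem_colon_span_singleton]
    constructor
    · intro hr Q hQ
      rw [← hs] at hr
      exact (Submodule.mem_finsetInf.mp hr) Q hQ
    · intro hr
      rw [← hs]
      exact Submodule.mem_finsetInf.mpr hr
  obtain ⟨Q, hQs, hQle⟩ := hp.inf_le'.mp (le_of_eq hpeq.symm)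
  have hle : p ≤ Q.colon (Ideal.span {x}) := by
    rw [hpeq]
    exact Finset.inf_le hQs
  have hpQ : p = Q.colon (Ideal.span {x}) := le_antisymm hle hQle
  refine ⟨Q, hQs, ?_⟩
  have hass : IsAssociatedPrime p (R ⧸ Q) := by
    refine isAssociatedPrime_iff.mpr ⟨hp, Submodule.Quotient.mk x, ?_⟩
    ext r
    rw [Submodule.mem_colon_singleton, Submodule.mem_bot, ← Submodule.Quotient.mk_smul,
      Submodule.Quotient.mk_eq_zero, smul_eq_mul, hpQ, Ideal.mem_colon_span_singleton]
  exact (hass.eq_radical (hprim hQs)).symm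

end Aux

/-- An `R`-module `M` is *weakly Laskerian* if every quotient of `M` has only finitely many
associated prime ideals. -/
def IsWeaklyLaskerian (R : Type*) [CommRing R] (M : Type*) [AddCommGroup M]
    [Module R M] : Prop :=
  ∀ N : Submodule R M, (associatedPrimes R (M ⧸ N)).Finite

set_option synthInstance.maxHeartbeats 1000000 in
set_option maxHeartbeats 2000000 in
/-- If `R` is a Noetherian commutative ring and `M` is a weakly Laskerian `R`-module, then
the trivial ring extension (idealization) `R ⋉ M` is a weakly Laskerian ring. -/
theorem trivSqZeroExt_isWeaklyLaskerian_of_noetherian {R M : Type*} [CommRing R]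
    [IsNoetherianRing R] [AddCommGroup M] [Module R M] [Module Rᵐᵒᵖ M]
    [IsCentralScalar R M] (hM : IsWeaklyLaskerian R M) :
    IsWeaklyLaskerian (TrivSqZeroExt R M) (TrivSqZeroExt R M) := by
  intro N
  -- the image of `M` in the quotient, as an `R`-submodule
  let φ : M →ₗ[R] (TrivSqZeroExt R M ⧸ N) :=
    (N.mkQ.restrictScalars R) ∘ₗ (TrivSqZeroExt.inrHom R M)
  let X : Submodule R (TrivSqZeroExt R M ⧸ N) := LinearMap.range φ
  let ψ : R →ₗ[R] ((TrivSqZeroExt R M ⧸ N) ⧸ X) :=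
    X.mkQ ∘ₗ (N.mkQ.restrictScalars R) ∘ₗ (Algebra.linearMap R (TrivSqZeroExt R M))
  have hψ : Function.Surjective ψ := by
    intro y
    obtain ⟨y, rfl⟩ := Submodule.Quotient.mk_surjective _ y
    obtain ⟨a, rfl⟩ := Submodule.Quotient.mk_surjective _ y
    refine ⟨TrivSqZeroExt.fst a, ?_⟩
    have h1 : ψ (TrivSqZeroExt.fst a) =
        Submodule.Quotient.mk (Submodule.Quotient.mk
          (TrivSqZeroExt.inl (TrivSqZeroExt.fst a))) := rfl
    have h2 : (Submodule.Quotient.mk (Submodule.Quotient.mk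
        (TrivSqZeroExt.inr (TrivSqZeroExt.snd a)) : TrivSqZeroExt R M ⧸ N) :
          (TrivSqZeroExt R M ⧸ N) ⧸ X) = 0 := by
      rw [Submodule.Quotient.mk_eq_zero]
      exact ⟨TrivSqZeroExt.snd a, rfl⟩
    rw [h1]
    conv_rhs => rw [← TrivSqZeroExt.inl_fst_add_inr_snd_eq a]
    rw [Submodule.Quotient.mk_add, Submodule.Quotient.mk_add, h2, add_zero]
  -- finiteness of the `R`-associated primes of the quotient
  have hXfin : (associatedPrimes R X).Finite := by
    have h := hM (LinearMap.ker φ)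
    rwa [LinearEquiv.AssociatedPrimes.eq (φ.quotKerEquivRange)] at h
  have hQfin : (associatedPrimes R ((TrivSqZeroExt R M ⧸ N) ⧸ X)).Finite := by
    have h := associatedPrimes_quotient_finite_aux (LinearMap.ker ψ)
    rwa [LinearEquiv.AssociatedPrimes.eq (LinearMap.quotKerEquivOfSurjective ψ hψ)] at h
  have hRfin : (associatedPrimes R (TrivSqZeroExt R M ⧸ N)).Finite :=
    Set.Finite.subset (hXfin.union hQfin) (associatedPrimes_subset_union_aux X)
  -- every associated prime over the idealization is the comap of one over `R`
  apply Set.Finite.subset (hRfin.image (Ideal.comap (TrivSqZeroExt.fstHom R R M).toRingHom))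
  rintro p ⟨hp, y, hy⟩
  have hinr : ∀ m : M, (TrivSqZeroExt.inr m : TrivSqZeroExt R M) ∈ p := by
    intro m
    apply hp.mem_of_pow_mem 2
    rw [pow_two, TrivSqZeroExt.inr_mul_inr]
    exact p.zero_mem
  have hsmul : ∀ r : R, r • y = (TrivSqZeroExt.inl r : TrivSqZeroExt R M) • y := by
    intro r
    obtain ⟨a, rfl⟩ := Submodule.Quotient.mk_surjective _ y
    rw [← Submodule.Quotient.mk_smul N, ← Submodule.Quotient.mk_smul N]
    congr 1
    rw [Algebra.smul_def]
    rfl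
  set q : Ideal R := ((⊥ : Submodule R (TrivSqZeroExt R M ⧸ N)).colon {y}).radical with hqdef
  have hqp : q = Ideal.comap (TrivSqZeroExt.inlHom R M) p := by
    ext r
    rw [hqdef, Ideal.mem_comap, hy, Ideal.mem_radical_iff, Ideal.mem_radical_iff]
    refine exists_congr fun n => ?_
    rw [Submodule.mem_colon_singleton, Submodule.mem_bot, Submodule.mem_colon_singleton,
      Submodule.mem_bot, hsmul, ← map_pow]
    exact Iff.rfl
  have hqprime : q.IsPrime := by
    rw [hqp]
    haveI := hp
    exact Ideal.IsPrime.comap _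
  refine ⟨q, ⟨hqprime, y, hqdef⟩, ?_⟩
  ext a
  rw [Ideal.mem_comap, hqp, Ideal.mem_comap]
  show (TrivSqZeroExt.inl (TrivSqZeroExt.fst a) : TrivSqZeroExt R M) ∈ p ↔ a ∈ p
  conv_rhs => rw [← TrivSqZeroExt.inl_fst_add_inr_snd_eq a]
  exact (p.add_mem_iff_left (hinr a.snd)).symm
end

section
/- Let R be a weakly Laskerian commutative ring, X an indeterminate over R, and J an ideal of the polynomial ring R[X] that contains a monic polynomial. Then the quotient ring R[X]/J is a weakly Laskerian ring. -/
section ModuleLemmas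
variable {R : Type*} [CommRing R] {M M' : Type*} [AddCommGroup M] [Module R M]
  [AddCommGroup M'] [Module R M']

theorem wl_of_surjective (f : M →ₗ[R] M') (hf : Function.Surjective f)
    (h : IsWeaklyLaskerian R M) : IsWeaklyLaskerian R M' := by
  intro N
  have hb : Function.Bijective (Submodule.mapQ (N.comap f) N f le_rfl) := by
    constructor
    · rw [← LinearMap.ker_eq_bot]
      apply LinearMap.ker_eq_bot'.mpr
      intro m hm
      obtain ⟨y, rfl⟩ := Submodule.mkQ_surjective _ m
      rw [Submodule.mkQ_apply, Submodule.mapQ_apply] at hm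
      rw [Submodule.mkQ_apply, Submodule.Quotient.mk_eq_zero]
      rw [Submodule.Quotient.mk_eq_zero] at hm
      exact hm
    · intro x
      obtain ⟨y, rfl⟩ := Submodule.mkQ_surjective N x
      obtain ⟨z, rfl⟩ := hf y
      exact ⟨Submodule.Quotient.mk z, by simp [Submodule.mapQ_apply]⟩
  have e := LinearEquiv.ofBijective _ hb
  rw [← LinearEquiv.AssociatedPrimes.eq e]
  exact h _

theorem wl_finite_ass (h : IsWeaklyLaskerian R M) : (associatedPrimes R M).Finite := by
  have e : (M ⧸ (⊥ : Submodule R M)) ≃ₗ[R] M := Submodule.quotEquivOfEqBot _ rfl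
  rw [← LinearEquiv.AssociatedPrimes.eq e]
  exact h ⊥

theorem ass_subset_union (N : Submodule R M) :
    associatedPrimes R M ⊆ associatedPrimes R N ∪ associatedPrimes R (M ⧸ N) := by
  rintro P ⟨hP, x, hx⟩
  by_cases hc : ∀ r : R, r • x ∈ N → r ∈ P
  · right
    refine ⟨hP, Submodule.Quotient.mk x, ?_⟩
    apply le_antisymm
    · rw [hx]
      apply Ideal.radical_mono
      intro r hr
      rw [Submodule.mem_colon_singleton, Submodule.mem_bot] at hr ⊢
      rw [← Submodule.Quotient.mk_smul, hr, Submodule.Quotient.mk_zero]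
    · rintro r ⟨n, hn⟩
      apply hP.mem_of_pow_mem n
      apply hc
      rw [Submodule.mem_colon_singleton, Submodule.mem_bot, ← Submodule.Quotient.mk_smul,
        Submodule.Quotient.mk_eq_zero] at hn
      exact hn
  · left
    push_neg at hc
    obtain ⟨r, hrN, hrP⟩ := hc
    refine ⟨hP, ⟨r • x, hrN⟩, ?_⟩
    apply le_antisymm
    · rw [hx]
      apply Ideal.radical_mono
      intro s hs
      rw [Submodule.mem_colon_singleton, Submodule.mem_bot] at hs ⊢
      ext
      show s • (r • x) = 0
      rw [smul_comm, hs, smul_zero]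
    · rintro s ⟨n, hn⟩
      rw [Submodule.mem_colon_singleton, Submodule.mem_bot] at hn
      have h2 : s ^ n * r ∈ P := by
        rw [hx]
        apply Ideal.le_radical
        rw [Submodule.mem_colon_singleton, Submodule.mem_bot, mul_smul]
        exact congrArg Subtype.val hn
      rcases hP.mem_or_mem h2 with h | h
      · exact hP.mem_of_pow_mem n h
      · exact absurd h hrP

theorem wl_of_submodule_quotient (N : Submodule R M)
    (h1 : IsWeaklyLaskerian R N) (h2 : IsWeaklyLaskerian R (M ⧸ N)) :
    IsWeaklyLaskerian R M := by
  intro N'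
  set S₁ : Submodule R (M ⧸ N') := N.map N'.mkQ with hS₁
  have hsub : associatedPrimes R (M ⧸ N') ⊆
      associatedPrimes R S₁ ∪ associatedPrimes R ((M ⧸ N') ⧸ S₁) :=
    ass_subset_union S₁
  have h1' : (associatedPrimes R ↥S₁).Finite := by
    set g : ↥N →ₗ[R] (M ⧸ N') := N'.mkQ ∘ₗ N.subtype with hg
    have hrange : LinearMap.range g = S₁ := by
      rw [hg, LinearMap.range_comp, Submodule.range_subtype]
    have hsurj : Function.Surjective (g.codRestrict S₁
        (fun x => hrange ▸ LinearMap.mem_range_self g x)) := by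
      rintro ⟨y, hy⟩
      rw [← hrange] at hy
      obtain ⟨x, hx⟩ := hy
      exact ⟨x, Subtype.ext hx⟩
    exact wl_finite_ass (wl_of_surjective _ hsurj h1)
  have h2' : (associatedPrimes R ((M ⧸ N') ⧸ S₁)).Finite := by
    have hker : N ≤ LinearMap.ker (S₁.mkQ ∘ₗ N'.mkQ) := by
      intro x hx
      simp only [LinearMap.mem_ker, LinearMap.comp_apply, Submodule.mkQ_apply,
        Submodule.Quotient.mk_eq_zero]
      exact Submodule.mem_map_of_mem hx
    set g2 : (M ⧸ N) →ₗ[R] ((M ⧸ N') ⧸ S₁) := N.liftQ _ hker with hg2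
    have hsurj2 : Function.Surjective g2 := by
      intro z
      obtain ⟨y, rfl⟩ := Submodule.mkQ_surjective _ z
      obtain ⟨x, rfl⟩ := Submodule.mkQ_surjective _ y
      exact ⟨Submodule.Quotient.mk x, rfl⟩
    exact wl_finite_ass (wl_of_surjective _ hsurj2 h2)
  exact ((h1'.union h2').subset hsub)

end ModuleLemmas

section ModuleLemmas2
variable {R : Type*} [CommRing R] {M M' : Type*} [AddCommGroup M] [Module R M]
  [AddCommGroup M'] [Module R M']

theorem wl_prod (hA : IsWeaklyLaskerian R M) (hB : IsWeaklyLaskerian R M') :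
    IsWeaklyLaskerian R (M × M') := by
  set N : Submodule R (M × M') := LinearMap.range (LinearMap.inl R M M') with hN
  apply wl_of_submodule_quotient N
  · exact wl_of_surjective _ (LinearMap.inl R M M').surjective_rangeRestrict hA
  · refine wl_of_surjective (N.mkQ ∘ₗ LinearMap.inr R M M') ?_ hB
    intro z
    obtain ⟨⟨a, b⟩, rfl⟩ := Submodule.mkQ_surjective _ z
    refine ⟨b, ?_⟩
    simp only [LinearMap.comp_apply, LinearMap.inr_apply, Submodule.mkQ_apply]
    rw [Submodule.Quotient.eq]
    exact ⟨-a, by simp [Prod.ext_iff]⟩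

theorem wl_pi (hR : IsWeaklyLaskerian R R) (n : ℕ) :
    IsWeaklyLaskerian R (Fin n → R) := by
  induction n with
  | zero =>
      intro N
      have : Subsingleton ((Fin 0 → R) ⧸ N) := (Submodule.mkQ_surjective N).subsingleton
      rw [associatedPrimes.eq_empty_of_subsingleton]
      exact Set.finite_empty
  | succ n ih =>
      have e : (R × (Fin n → R)) ≃ₗ[R] (Fin (n + 1) → R) :=
        { toFun := fun p => Fin.cons p.1 p.2
          map_add' := fun p q => by
            funext i
            refine Fin.cases ?_ (fun j => ?_) i <;> simp
          map_smul' := fun r p => by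
            funext i
            refine Fin.cases ?_ (fun j => ?_) i <;> simp
          invFun := fun f => (f 0, fun j => f j.succ)
          left_inv := fun p => by simp
          right_inv := fun f => by
            funext i
            refine Fin.cases ?_ (fun j => ?_) i <;> simp }
      exact wl_of_surjective e.toLinearMap e.surjective (wl_prod hR ih)

theorem wl_of_finite (hR : IsWeaklyLaskerian R R) [Module.Finite R M] :
    IsWeaklyLaskerian R M := by
  obtain ⟨n, f, hf⟩ := Module.Finite.exists_fin' R M
  exact wl_of_surjective f hf (wl_pi hR n)

end ModuleLemmas2

section Fiber
open Polynomial

variable {R : Type*} [CommRing R]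

/-- comap of associated prime along algebra map is an associated prime of restricted module. -/
theorem isAssociatedPrime_comap {S : Type*} [CommRing S] [Algebra R S]
    {M : Type*} [AddCommGroup M] [Module R M] [Module S M] [IsScalarTower R S M]
    {P : Ideal S} (h : IsAssociatedPrime P M) :
    IsAssociatedPrime (P.comap (algebraMap R S)) M := by
  obtain ⟨hP, x, hx⟩ := h
  refine ⟨hP.comap _, x, ?_⟩
  ext r
  rw [Ideal.mem_comap, hx]
  constructor
  · rintro ⟨n, hn⟩
    refine ⟨n, ?_⟩
    rw [Submodule.mem_colon_singleton, Submodule.mem_bot] at hn ⊢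
    rw [← map_pow, algebraMap_smul] at hn
    exact hn
  · rintro ⟨n, hn⟩
    refine ⟨n, ?_⟩
    rw [Submodule.mem_colon_singleton, Submodule.mem_bot] at hn ⊢
    rw [← map_pow, algebraMap_smul]
    exact hn

/-- Primes of `k[X]` (k a field) containing a fixed monic polynomial form a finite set. -/
theorem finite_primes_containing {k : Type*} [Field k] (f : k[X]) (hf : f.Monic) :
    {Q : Ideal k[X] | Q.IsPrime ∧ f ∈ Q}.Finite := by
  by_cases hdeg : f = 1
  · convert Set.finite_empty
    ext Q
    simp only [Set.mem_setOf_eq, Set.mem_empty_iff_false, iff_false, not_and]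
    intro hQ hfQ
    exact hQ.ne_top (Ideal.eq_top_of_isUnit_mem Q (hdeg ▸ hfQ) isUnit_one)
  haveI : Module.Finite k (AdjoinRoot f) := Module.Finite.of_basis (AdjoinRoot.powerBasis hf.ne_zero).basis
  haveI : IsArtinian k (AdjoinRoot f) := inferInstance
  haveI : IsArtinianRing (AdjoinRoot f) := isArtinian_of_tower k inferInstance
  have hfin : {I : Ideal (AdjoinRoot f) | I.IsPrime}.Finite := IsArtinianRing.setOfPred_isPrime_finite _
  set π : k[X] →+* AdjoinRoot f := Ideal.Quotient.mk (Ideal.span {f}) with hπ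
  have hπs : Function.Surjective π := Ideal.Quotient.mk_surjective
  apply Set.Finite.of_finite_image (f := fun Q => Q.map π) (hfin.subset ?_)
  · -- injOn
    rintro Q₁ ⟨h₁, hf₁⟩ Q₂ ⟨h₂, hf₂⟩ he
    have hker : ∀ (Q : Ideal k[X]), Q.IsPrime → f ∈ Q → RingHom.ker π ≤ Q := by
      intro Q hQ hfQ
      rw [show RingHom.ker π = Ideal.span {f} from Ideal.mk_ker, Ideal.span_le,
        Set.singleton_subset_iff]
      exact hfQ
    have := congrArg (Ideal.comap π) he
    rwa [Ideal.comap_map_of_surjective' π hπs, Ideal.comap_map_of_surjective' π hπs,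
      sup_eq_left.mpr (hker Q₁ h₁ hf₁), sup_eq_left.mpr (hker Q₂ h₂ hf₂)] at this
  · rintro I ⟨Q, ⟨hQ, hfQ⟩, rfl⟩
    exact Ideal.map_isPrime_of_surjective hπs (by
      rw [show RingHom.ker π = Ideal.span {f} from Ideal.mk_ker, Ideal.span_le,
        Set.singleton_subset_iff]; exact hfQ)

end Fiber

section FiberR
open Polynomial

variable {R : Type*} [CommRing R]

set_option maxHeartbeats 1000000 in
set_option synthInstance.maxHeartbeats 400000 in
theorem fiber_finite (f : R[X]) (hf : f.Monic) (p : Ideal R) (hp : p.IsPrime) :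
    {P : Ideal R[X] | P.IsPrime ∧ f ∈ P ∧ Ideal.comap (C : R →+* R[X]) P = p}.Finite := by
  set D := R ⧸ p with hD
  set k := FractionRing D with hk
  set φ : R →+* k := (algebraMap D k).comp (Ideal.Quotient.mk p) with hφ
  set Φ : R[X] →+* k[X] := mapRingHom φ with hΦ
  have hΦa : ∀ g : R[X], Φ g = g.map φ := fun g => rfl
  -- φ kills exactly p
  have hkerφ : ∀ c : R, φ c = 0 ↔ c ∈ p := by
    intro c
    rw [hφ, RingHom.comp_apply, ← map_zero (algebraMap D k),
      (IsFractionRing.injective D k).eq_iff, Ideal.Quotient.eq_zero_iff_mem]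
  -- clear denominators for a single polynomial
  have cd : ∀ h : k[X], ∃ c : R, c ∉ p ∧ ∃ a : R[X], C (φ c) * h = a.map φ := by
    intro h
    obtain ⟨b, hb⟩ := IsLocalization.integerNormalization_map_to_map (nonZeroDivisors D) h
    obtain ⟨c, hc⟩ := Ideal.Quotient.mk_surjective (I := p) (b : D)
    obtain ⟨a, ha⟩ := Polynomial.map_surjective _ (Ideal.Quotient.mk_surjective (I := p))
      (IsLocalization.integerNormalization (nonZeroDivisors D) h)
    refine ⟨c, ?_, a, ?_⟩
    · intro hcp
      have : (b : D) = 0 := by rw [← hc, Ideal.Quotient.eq_zero_iff_mem]; exact hcp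
      exact nonZeroDivisors.ne_zero b.2 this
    · have : a.map φ = (a.map (Ideal.Quotient.mk p)).map (algebraMap D k) := by
        rw [hφ, Polynomial.map_map]
      rw [this, ha, hb]
      rw [Algebra.smul_def, Polynomial.algebraMap_apply]
      congr 1
      rw [hφ, RingHom.comp_apply, hc]
  have key : ∀ P : Ideal R[X], P.IsPrime → Ideal.comap (C : R →+* R[X]) P = p →
      ∀ h ∈ Ideal.map Φ P, ∃ c : R, c ∉ p ∧ ∃ a ∈ P, C (φ c) * h = a.map φ := by
    intro P hP hPC h hh
    have h1p : (1 : R) ∉ p := fun h1 => hp.ne_top (Ideal.eq_top_iff_one p |>.mpr h1)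
    rw [Ideal.map] at hh
    refine Submodule.span_induction ?_ ?_ ?_ ?_ hh
    · rintro x ⟨a, ha, rfl⟩
      exact ⟨1, h1p, a, ha, by simp [hΦa]⟩
    · exact ⟨1, h1p, 0, P.zero_mem, by simp⟩
    · rintro x y _ _ ⟨c, hc, a, ha, ea⟩ ⟨d, hd, b, hb, eb⟩
      refine ⟨c * d, fun hcd => ((hp.mem_or_mem hcd).elim hc hd), C d * a + C c * b,
        Ideal.add_mem _ (P.mul_mem_left _ ha) (P.mul_mem_left _ hb), ?_⟩
      rw [Polynomial.map_add, Polynomial.map_mul, Polynomial.map_mul, map_C, map_C,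
        ← ea, ← eb, map_mul, C_mul]
      ring
    · rintro r x _ ⟨c, hc, a, ha, ea⟩
      obtain ⟨e, he, y, hy⟩ := cd r
      refine ⟨e * c, fun hec => ((hp.mem_or_mem hec).elim he hc), y * a,
        P.mul_mem_left _ ha, ?_⟩
      rw [smul_eq_mul, Polynomial.map_mul, ← hy, ← ea, map_mul, C_mul]
      ring
  have hker : ∀ P : Ideal R[X], Ideal.comap (C : R →+* R[X]) P = p →
      ∀ g : R[X], g.map φ = 0 → g ∈ P := by
    intro P hPC g hg
    apply Ideal.polynomial_mem_ideal_of_coeff_mem_ideal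
    intro n
    rw [hPC, ← hkerφ]
    have := congrArg (fun q => Polynomial.coeff q n) hg
    simpa using this
  have comap_map : ∀ P : Ideal R[X], P.IsPrime → Ideal.comap (C : R →+* R[X]) P = p →
      Ideal.comap Φ (Ideal.map Φ P) = P := by
    intro P hP hPC
    refine le_antisymm ?_ Ideal.le_comap_map
    intro g hg
    rw [Ideal.mem_comap] at hg
    obtain ⟨c, hc, a, ha, e⟩ := key P hP hPC _ hg
    rw [hΦa] at e
    have hsub : C c * g - a ∈ P := by
      apply hker P hPC
      rw [Polynomial.map_sub, Polynomial.map_mul, map_C, e, sub_self]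
    have hCg : C c * g ∈ P := by simpa using P.add_mem hsub ha
    rcases hP.mem_or_mem hCg with h | h
    · exact absurd (by rwa [← Ideal.mem_comap, hPC] at h) hc
    · exact h
  apply Set.Finite.of_finite_image (f := fun P => Ideal.map Φ P)
    ((finite_primes_containing (f.map φ) (hf.map φ)).subset ?_)
  · rintro P₁ ⟨h₁, hf₁, hc₁⟩ P₂ ⟨h₂, hf₂, hc₂⟩ he
    have := congrArg (Ideal.comap Φ) he
    rwa [comap_map P₁ h₁ hc₁, comap_map P₂ h₂ hc₂] at this
  · rintro Q ⟨P, ⟨hP, hfP, hPC⟩, rfl⟩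
    show (Ideal.map Φ P).IsPrime ∧ f.map φ ∈ Ideal.map Φ P
    have hunit : ∀ c : R, c ∉ p → IsUnit (C (φ c) : k[X]) :=
      fun c hc => Polynomial.isUnit_C.mpr (isUnit_iff_ne_zero.mpr (fun h0 => hc ((hkerφ c).mp h0)))
    have unit_cancel : ∀ c : R, c ∉ p → ∀ u : k[X], C (φ c) * u ∈ Ideal.map Φ P →
        u ∈ Ideal.map Φ P := by
      intro c hc u hu
      obtain ⟨w, hw⟩ := hunit c hc
      have h3 := Ideal.mul_mem_left (Ideal.map Φ P) (↑w⁻¹) hu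
      rwa [← mul_assoc, ← hw, ← Units.val_mul, inv_mul_cancel, Units.val_one, one_mul] at h3
    refine ⟨⟨?_, ?_⟩, ?_⟩
    · intro htop
      have h1 : (1 : k[X]) ∈ Ideal.map Φ P := by rw [htop]; exact Submodule.mem_top
      obtain ⟨c, hc, a, ha, e⟩ := key P hP hPC 1 h1
      rw [mul_one] at e
      have hsub : C c - a ∈ P := by
        apply hker P hPC
        rw [Polynomial.map_sub, map_C, e, sub_self]
      have hCc : (C c : R[X]) ∈ P := by simpa using P.add_mem hsub ha
      exact hc (by rwa [← Ideal.mem_comap, hPC] at hCc)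
    · intro u v huv
      obtain ⟨c, hc, a, hya⟩ := cd u
      obtain ⟨d, hd, b, hyb⟩ := cd v
      have hab : a * b ∈ P := by
        have hmem : Φ (a * b) ∈ Ideal.map Φ P := by
          have h2 : Φ (a * b) = C (φ (c * d)) * (u * v) := by
            rw [hΦa, Polynomial.map_mul, ← hya, ← hyb, map_mul, C_mul]; ring
          rw [h2]
          exact Ideal.mul_mem_left _ _ huv
        rwa [← Ideal.mem_comap, comap_map P hP hPC] at hmem
      rcases hP.mem_or_mem hab with h | h
      · left
        have hm : Φ a ∈ Ideal.map Φ P := Ideal.mem_map_of_mem Φ h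
        rw [hΦa, ← hya] at hm
        exact unit_cancel c hc u hm
      · right
        have hm : Φ b ∈ Ideal.map Φ P := Ideal.mem_map_of_mem Φ h
        rw [hΦa, ← hyb] at hm
        exact unit_cancel d hd v hm
    · have : Φ f ∈ Ideal.map Φ P := Ideal.mem_map_of_mem Φ hfP
      rwa [hΦa] at this

end FiberR

open Polynomial in
theorem isWeaklyLaskerian_polynomial_quotient' {R : Type*} [CommRing R]
    (hR : IsWeaklyLaskerian R R) (J : Ideal (Polynomial R))
    (hJ : ∃ f ∈ J, f.Monic) :
    IsWeaklyLaskerian (Polynomial R ⧸ J) (Polynomial R ⧸ J) := by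
  obtain ⟨f, hfJ, hf⟩ := hJ
  set S := Polynomial R ⧸ J with hS
  -- S is a finite R-module
  have hfin : Module.Finite R S := by
    haveI : Module.Finite R (Polynomial R ⧸ Ideal.span {f}) :=
      Module.Finite.of_basis (AdjoinRoot.powerBasis' hf).basis
    have hle : Ideal.span {f} ≤ J.comap (AlgHom.id R (Polynomial R)) := by
      rw [Ideal.span_le, Set.singleton_subset_iff]; exact hfJ
    have hsurj : Function.Surjective (Ideal.quotientMapₐ J (AlgHom.id R (Polynomial R)) hle) := by
      intro x
      obtain ⟨y, rfl⟩ := Ideal.Quotient.mk_surjective x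
      exact ⟨Ideal.Quotient.mk _ y, rfl⟩
    exact Module.Finite.of_surjective
      (Ideal.quotientMapₐ J (AlgHom.id R (Polynomial R)) hle).toLinearMap hsurj
  have hWLS : IsWeaklyLaskerian R S := wl_of_finite hR
  intro N
  -- the set of associated primes over R of the quotient is finite
  have hAssR : (associatedPrimes R (S ⧸ N)).Finite := by
    have hsurj : Function.Surjective ((N.mkQ).restrictScalars R) := Submodule.mkQ_surjective N
    exact wl_finite_ass (wl_of_surjective _ hsurj hWLS)
  set π : Polynomial R →+* S := Ideal.Quotient.mk J with hπ
  have hπs : Function.Surjective π := Ideal.Quotient.mk_surjective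
  have halg : (algebraMap R S) = π.comp (C : R →+* Polynomial R) := by
    rw [IsScalarTower.algebraMap_eq R (Polynomial R) S, Polynomial.algebraMap_eq]
    rfl
  have hT : (⋃ p ∈ associatedPrimes R (S ⧸ N),
      {P : Ideal (Polynomial R) | P.IsPrime ∧ f ∈ P ∧ Ideal.comap (C : R →+* Polynomial R) P = p}).Finite :=
    hAssR.biUnion (fun p hp => fiber_finite f hf p hp.isPrime)
  apply Set.Finite.of_finite_image (f := fun P => Ideal.comap π P) (hT.subset ?_)
  · intro P₁ _ P₂ _ he
    have := congrArg (Ideal.map π) he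
    rwa [Ideal.map_comap_of_surjective π hπs, Ideal.map_comap_of_surjective π hπs] at this
  · rintro Q ⟨P, hP, rfl⟩
    have hprime : P.IsPrime := hP.isPrime
    refine Set.mem_biUnion (isAssociatedPrime_comap (R := R) hP) ?_
    refine ⟨hprime.comap π, ?_, ?_⟩
    · rw [Ideal.mem_comap]
      have : π f = 0 := Ideal.Quotient.eq_zero_iff_mem.mpr hfJ
      rw [this]; exact P.zero_mem
    · rw [Ideal.comap_comap, ← halg]


/-- If `R` is a weakly Laskerian commutative ring and `J` is an ideal of `R[X]` containing
a monic polynomial, then the quotient ring `R[X] ⧸ J` is weakly Laskerian. -/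
theorem isWeaklyLaskerian_polynomial_quotient {R : Type*} [CommRing R]
    (hR : IsWeaklyLaskerian R R) (J : Ideal (Polynomial R))
    (hJ : ∃ f ∈ J, f.Monic) :
    IsWeaklyLaskerian (Polynomial R ⧸ J) (Polynomial R ⧸ J) := by
  exact isWeaklyLaskerian_polynomial_quotient' hR J hJ
end
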